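/- arXiv:1304.8075 — 2 statements merged into one kernel-verified Lean document; each statement's English description precedes it below -/
import Mathlib

section
/- Let ρ be a Hermitian 3×3 complex matrix. Then ρ is a density matrix with at least one zero eigenvalue (equivalently, a positive semidefinite trace-one matrix with det ρ = 0) if and only if Tr(ρ) = 1, Tr(ρ²) ≤ 1, and 3·Tr(ρ²) − 2·Tr(ρ³) = 1. -/
open ComplexOrder

lemma trace_pow_eq (ρ : Matrix (Fin 3) (Fin 3) ℂ) (hρ : ρ.IsHermitian) (k : ℕ) :
    (ρ ^ k).trace = ∑ i, (hρ.eigenvalues i : ℂ) ^ k := by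
  set U : Matrix (Fin 3) (Fin 3) ℂ := (hρ.eigenvectorUnitary : Matrix (Fin 3) (Fin 3) ℂ) with hUdef
  have hU2 : star U * U = 1 := (Matrix.mem_unitaryGroup_iff').mp hρ.eigenvectorUnitary.2
  set D : Matrix (Fin 3) (Fin 3) ℂ := Matrix.diagonal (RCLike.ofReal ∘ hρ.eigenvalues) with hDdef
  have hpow : ∀ n : ℕ, (U * D * star U) ^ (n + 1) = U * D ^ (n + 1) * star U := by
    intro n
    induction n with
    | zero => simp
    | succ m ih =>
        rw [pow_succ, ih, pow_succ]
        calc U * D ^ (m + 1) * star U * (U * D * star U)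
            = U * D ^ (m + 1) * (star U * U) * D * star U := by
              simp only [Matrix.mul_assoc]
          _ = U * (D ^ (m + 1) * D) * star U := by
              rw [hU2]; simp only [Matrix.mul_assoc, Matrix.mul_one]
  rcases k with _ | n
  · simp [Matrix.trace_one]
  · have key : ρ ^ (n + 1) = U * D ^ (n + 1) * star U := by
      conv_lhs => rw [hρ.spectral_theorem]
      exact hpow n
    rw [key, Matrix.trace_mul_cycle, hU2, Matrix.one_mul]
    simp [hDdef, Matrix.diagonal_pow, Matrix.trace_diagonal]

lemma cubic_identity (x y z : ℝ) (hs : x + y + z = 1) (hx : x = 0) :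
    3 * (x ^ 2 + y ^ 2 + z ^ 2) - 2 * (x ^ 3 + y ^ 3 + z ^ 3) = 1 := by
  subst hx
  have hz : z = 1 - y := by linarith
  subst hz
  ring

lemma nonneg_of (x y z : ℝ) (hs : x + y + z = 1) (h2 : x ^ 2 + y ^ 2 + z ^ 2 ≤ 1)
    (hz : z = 0) : 0 ≤ x := by
  subst hz
  nlinarith [sq_nonneg x, sq_nonneg y, sq_nonneg (x - y)]

/-- A Hermitian 3×3 complex matrix is a density matrix with at least one zero
eigenvalue (equivalently, positive semidefinite with trace 1 and determinant 0)
if and only if Tr(ρ) = 1, Tr(ρ²) ≤ 1, and 3·Tr(ρ²) − 2·Tr(ρ³) = 1. -/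
theorem boundary_density_iff_trace_conditions
    (ρ : Matrix (Fin 3) (Fin 3) ℂ) (hρ : ρ.IsHermitian) :
    (ρ.PosSemidef ∧ ρ.trace = 1 ∧ ρ.det = 0) ↔
      (ρ.trace = 1 ∧ ((ρ ^ 2).trace).re ≤ 1 ∧
        3 * ((ρ ^ 2).trace).re - 2 * ((ρ ^ 3).trace).re = 1) := by
  set a := hρ.eigenvalues 0 with ha_def
  set b := hρ.eigenvalues 1 with hb_def
  set c := hρ.eigenvalues 2 with hc_def
  have htr : ρ.trace = ((a + b + c : ℝ) : ℂ) := by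
    have := trace_pow_eq ρ hρ 1
    simp only [pow_one] at this
    rw [this, Fin.sum_univ_three]; push_cast; ring
  have h2 : ((ρ ^ 2).trace).re = a ^ 2 + b ^ 2 + c ^ 2 := by
    rw [trace_pow_eq ρ hρ 2, Fin.sum_univ_three]
    simp [← Complex.ofReal_pow]
    rfl
  have h3 : ((ρ ^ 3).trace).re = a ^ 3 + b ^ 3 + c ^ 3 := by
    rw [trace_pow_eq ρ hρ 3, Fin.sum_univ_three]
    simp [← Complex.ofReal_pow]
    rfl
  have hdet : ρ.det = ((a * b * c : ℝ) : ℂ) := by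
    rw [hρ.det_eq_prod_eigenvalues, Fin.prod_univ_three]; push_cast; rfl
  constructor
  · rintro ⟨hpsd, ht, hd⟩
    have ha : (0:ℝ) ≤ a := hpsd.eigenvalues_nonneg 0
    have hb : (0:ℝ) ≤ b := hpsd.eigenvalues_nonneg 1
    have hc : (0:ℝ) ≤ c := hpsd.eigenvalues_nonneg 2
    rw [htr] at ht
    have hsum : a + b + c = 1 := by exact_mod_cast ht
    rw [hdet] at hd
    have hprod : a * b * c = 0 := by exact_mod_cast hd
    refine ⟨by rw [htr]; exact_mod_cast hsum, ?_, ?_⟩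
    · rw [h2]
      nlinarith [mul_nonneg ha hb, mul_nonneg hb hc, mul_nonneg ha hc]
    · rw [h2, h3]
      rcases mul_eq_zero.mp hprod with h | h
      · rcases mul_eq_zero.mp h with h | h
        · exact cubic_identity a b c hsum h
        · have := cubic_identity b a c (by linarith) h
          linarith
      · have := cubic_identity c a b (by linarith) h
        linarith
  · rintro ⟨ht, h2le, heq⟩
    rw [htr] at ht
    have hsum : a + b + c = 1 := by exact_mod_cast ht
    rw [h2] at h2le
    rw [h2, h3] at heq
    have hprod : a * b * c = 0 := by
      linear_combination (-1/6 : ℝ) * heq +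
        ((6*(a*b+b*c+a*c) - (a+b+c-1)*(2*(a+b+c)+1))/6) * hsum
    have hnn : 0 ≤ a ∧ 0 ≤ b ∧ 0 ≤ c := by
      rcases mul_eq_zero.mp hprod with h | h
      · rcases mul_eq_zero.mp h with h | h
        · exact ⟨le_of_eq h.symm,
            nonneg_of b c a (by linarith) (by linarith) h,
            nonneg_of c b a (by linarith) (by linarith) h⟩
        · exact ⟨nonneg_of a c b (by linarith) (by linarith) h,
            le_of_eq h.symm,
            nonneg_of c a b (by linarith) (by linarith) h⟩
      · exact ⟨nonneg_of a b c (by linarith) (by linarith) h,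
          nonneg_of b a c (by linarith) (by linarith) h,
          le_of_eq h.symm⟩
    refine ⟨hρ.posSemidef_iff_eigenvalues_nonneg.mpr ?_, by rw [htr]; exact_mod_cast hsum,
      by rw [hdet]; exact_mod_cast hprod⟩
    intro i
    fin_cases i
    · exact hnn.1
    · exact hnn.2.1
    · exact hnn.2.2
end

section
/- Let {Π_a}_{a ∈ (ℤ/3ℤ)²} be the canonical Hesse SIC, let ρ be a 3×3 density matrix, and set p(a) = Tr(ρΠ_a)/3. Then ρ is a rank-one orthogonal projection (a pure state) if and only if Σ_a p(a)² = 1/6 and Σ_a p(a)³ = (1/2)·Σ_{(a,b,c)} p(a)p(b)p(c), where the latter sum ranges over all ordered triples of pairwise distinct points a, b, c ∈ (ℤ/3ℤ)² with a + b + c = 0 (i.e., ordered triples of distinct collinear points of the affine plane of order 3). -/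
open ComplexOrder

/-- ω = e^{2πi/3}. -/
noncomputable def ω : ℂ := Complex.exp (2 * Real.pi * Complex.I / 3)

/-- The shift matrix X on ℂ³: X·e_j = e_{j+1 mod 3}. -/
def Xmat : Matrix (Fin 3) (Fin 3) ℂ :=
  Matrix.of fun i j => if i = j + 1 then 1 else 0

/-- The phase matrix Z on ℂ³: Z·e_j = ω^j·e_j. -/
noncomputable def Zmat : Matrix (Fin 3) (Fin 3) ℂ :=
  Matrix.diagonal fun j => ω ^ (j : ℕ)

/-- The fiducial vector ψ₀ = (0, 1, −1)/√2 of the canonical Hesse SIC. -/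
noncomputable def ψ₀ : Fin 3 → ℂ :=
  fun i => (Real.sqrt 2 : ℂ)⁻¹ * ![0, 1, -1] i

/-- The vectors X^m Z^n ψ₀ of the canonical Hesse SIC. -/
noncomputable def hesseVec (a : ZMod 3 × ZMod 3) : Fin 3 → ℂ :=
  (Xmat ^ a.1.val * Zmat ^ a.2.val).mulVec ψ₀

/-- The projections of the canonical Hesse SIC. -/
noncomputable def hesseProj (a : ZMod 3 × ZMod 3) : Matrix (Fin 3) (Fin 3) ℂ :=
  Matrix.vecMulVec (hesseVec a) (star (hesseVec a))

private lemma omega_cube : ω ^ 3 = 1 := by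
  rw [ω, ← Complex.exp_nat_mul]
  rw [show (3:ℕ) * (2 * (Real.pi:ℂ) * Complex.I / 3) = 2 * Real.pi * Complex.I by
    push_cast; ring]
  exact Complex.exp_two_pi_mul_I

private lemma omega_conj : (starRingEnd ℂ) ω = ω ^ 2 := by
  have h1 : (starRingEnd ℂ) ω = ω⁻¹ := by
    rw [ω, ← Complex.exp_neg, ← Complex.exp_conj]
    congr 1
    rw [show (2 * (Real.pi:ℂ) * Complex.I / 3) = ((2 * Real.pi / 3 : ℝ) : ℂ) * Complex.I by
      push_cast; ring]
    rw [map_mul, Complex.conj_ofReal, Complex.conj_I]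
    ring
  rw [h1]
  exact inv_eq_of_mul_eq_one_right (by linear_combination omega_cube)

private lemma hs2 : ((Real.sqrt 2 : ℝ) : ℂ)⁻¹ * ((Real.sqrt 2 : ℝ) : ℂ)⁻¹ = 1/2 := by
  rw [← mul_inv, ← Complex.ofReal_mul, Real.mul_self_sqrt (by norm_num)]
  norm_num

private lemma zsum {M : Type*} [AddCommMonoid M] (f : ZMod 3 → M) : ∑ a, f a = f 0 + f 1 + f 2 :=
  Fin.sum_univ_three f

private lemma trace_helper (ρ : Matrix (Fin 3) (Fin 3) ℂ) (v : Fin 3 → ℂ) :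
    (ρ * Matrix.vecMulVec v (star v)).trace =
      ∑ j : Fin 3, ∑ k : Fin 3, ρ j k * (v k * (starRingEnd ℂ) (v j)) := by
  simp only [Matrix.trace, Matrix.diag, Matrix.mul_apply, Matrix.vecMulVec_apply,
    Pi.star_apply, Complex.star_def]

private lemma omega_ne_one : ω ≠ 1 := by
  intro h
  rw [ω, Complex.exp_eq_one_iff] at h
  obtain ⟨n, hn⟩ := h
  have hπ : (Real.pi : ℂ) ≠ 0 := by exact_mod_cast Real.pi_ne_zero
  have hI : Complex.I ≠ 0 := Complex.I_ne_zero
  have h3 : ((3 * n : ℤ) : ℂ) = 1 := by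
    have h2 : (2 * (Real.pi:ℂ) * Complex.I) * (1 - 3 * n) = 0 := by
      push_cast at hn ⊢
      linear_combination 3 * hn
    rcases mul_eq_zero.mp h2 with h | h
    · exfalso
      rcases mul_eq_zero.mp h with h' | h'
      · rcases mul_eq_zero.mp h' with h'' | h''
        · norm_num at h''
        · exact hπ h''
      · exact hI h'
    · push_cast
      linear_combination -h
  have : (3 * n : ℤ) = 1 := by exact_mod_cast h3
  omega

private lemma omega_rel : ω ^ 2 + ω + 1 = 0 := by
  have h2 : (ω - 1) * (ω ^ 2 + ω + 1) = 0 := by linear_combination omega_cube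
  rcases mul_eq_zero.mp h2 with h' | h'
  · exact absurd (by linear_combination h' : ω = 1) omega_ne_one
  · exact h'


private lemma hv00 : hesseVec (0, 0) = fun j => (Real.sqrt 2 : ℂ)⁻¹ * ![0, 1, -1] j := by
  funext j
  fin_cases j <;>
    simp [hesseVec, Xmat, Zmat, ψ₀, Matrix.mulVec, dotProduct, Matrix.mul_apply,
      Fin.sum_univ_three, pow_succ, Matrix.diagonal, Matrix.one_apply,
      show ((0:ZMod 3)).val = 0 from rfl, show ((1:ZMod 3)).val = 1 from rfl,
      show ((2:ZMod 3)).val = 2 from rfl] <;>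
    ring

private lemma hv01 : hesseVec (0, 1) = fun j => (Real.sqrt 2 : ℂ)⁻¹ * ![0, ω, -ω^2] j := by
  funext j
  fin_cases j <;>
    simp [hesseVec, Xmat, Zmat, ψ₀, Matrix.mulVec, dotProduct, Matrix.mul_apply,
      Fin.sum_univ_three, pow_succ, Matrix.diagonal, Matrix.one_apply,
      show ((0:ZMod 3)).val = 0 from rfl, show ((1:ZMod 3)).val = 1 from rfl,
      show ((2:ZMod 3)).val = 2 from rfl] <;>
    ring

private lemma hv02 : hesseVec (0, 2) = fun j => (Real.sqrt 2 : ℂ)⁻¹ * ![0, ω^2, -ω^4] j := by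
  funext j
  fin_cases j <;>
    simp [hesseVec, Xmat, Zmat, ψ₀, Matrix.mulVec, dotProduct, Matrix.mul_apply,
      Fin.sum_univ_three, pow_succ, Matrix.diagonal, Matrix.one_apply,
      show ((0:ZMod 3)).val = 0 from rfl, show ((1:ZMod 3)).val = 1 from rfl,
      show ((2:ZMod 3)).val = 2 from rfl] <;>
    ring

private lemma hv10 : hesseVec (1, 0) = fun j => (Real.sqrt 2 : ℂ)⁻¹ * ![-1, 0, 1] j := by
  funext j
  fin_cases j <;>
    simp [hesseVec, Xmat, Zmat, ψ₀, Matrix.mulVec, dotProduct, Matrix.mul_apply,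
      Fin.sum_univ_three, pow_succ, Matrix.diagonal, Matrix.one_apply,
      show ((0:ZMod 3)).val = 0 from rfl, show ((1:ZMod 3)).val = 1 from rfl,
      show ((2:ZMod 3)).val = 2 from rfl] <;>
    ring

private lemma hv11 : hesseVec (1, 1) = fun j => (Real.sqrt 2 : ℂ)⁻¹ * ![-ω^2, 0, ω] j := by
  funext j
  fin_cases j <;>
    simp [hesseVec, Xmat, Zmat, ψ₀, Matrix.mulVec, dotProduct, Matrix.mul_apply,
      Fin.sum_univ_three, pow_succ, Matrix.diagonal, Matrix.one_apply,
      show ((0:ZMod 3)).val = 0 from rfl, show ((1:ZMod 3)).val = 1 from rfl,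
      show ((2:ZMod 3)).val = 2 from rfl] <;>
    ring

private lemma hv12 : hesseVec (1, 2) = fun j => (Real.sqrt 2 : ℂ)⁻¹ * ![-ω^4, 0, ω^2] j := by
  funext j
  fin_cases j <;>
    simp [hesseVec, Xmat, Zmat, ψ₀, Matrix.mulVec, dotProduct, Matrix.mul_apply,
      Fin.sum_univ_three, pow_succ, Matrix.diagonal, Matrix.one_apply,
      show ((0:ZMod 3)).val = 0 from rfl, show ((1:ZMod 3)).val = 1 from rfl,
      show ((2:ZMod 3)).val = 2 from rfl] <;>
    ring

private lemma hv20 : hesseVec (2, 0) = fun j => (Real.sqrt 2 : ℂ)⁻¹ * ![1, -1, 0] j := by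
  funext j
  fin_cases j <;>
    simp [hesseVec, Xmat, Zmat, ψ₀, Matrix.mulVec, dotProduct, Matrix.mul_apply,
      Fin.sum_univ_three, pow_succ, Matrix.diagonal, Matrix.one_apply,
      show ((0:ZMod 3)).val = 0 from rfl, show ((1:ZMod 3)).val = 1 from rfl,
      show ((2:ZMod 3)).val = 2 from rfl] <;>
    ring

private lemma hv21 : hesseVec (2, 1) = fun j => (Real.sqrt 2 : ℂ)⁻¹ * ![ω, -ω^2, 0] j := by
  funext j
  fin_cases j <;>
    simp [hesseVec, Xmat, Zmat, ψ₀, Matrix.mulVec, dotProduct, Matrix.mul_apply,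
      Fin.sum_univ_three, pow_succ, Matrix.diagonal, Matrix.one_apply,
      show ((0:ZMod 3)).val = 0 from rfl, show ((1:ZMod 3)).val = 1 from rfl,
      show ((2:ZMod 3)).val = 2 from rfl] <;>
    ring

private lemma hv22 : hesseVec (2, 2) = fun j => (Real.sqrt 2 : ℂ)⁻¹ * ![ω^2, -ω^4, 0] j := by
  funext j
  fin_cases j <;>
    simp [hesseVec, Xmat, Zmat, ψ₀, Matrix.mulVec, dotProduct, Matrix.mul_apply,
      Fin.sum_univ_three, pow_succ, Matrix.diagonal, Matrix.one_apply,
      show ((0:ZMod 3)).val = 0 from rfl, show ((1:ZMod 3)).val = 1 from rfl,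
      show ((2:ZMod 3)).val = 2 from rfl] <;>
    ring

private lemma q00 (ρ : Matrix (Fin 3) (Fin 3) ℂ) :
    (ρ * hesseProj (0, 0)).trace = (1/2) * (ρ 2 2 + (-1 : ℂ) * ρ 2 1 + (-1 : ℂ) * ρ 1 2 + ρ 1 1) := by
  rw [hesseProj, hv00, trace_helper]
  simp only [Fin.sum_univ_three, Matrix.cons_val_zero, Matrix.cons_val_one, Matrix.head_cons,
    Matrix.cons_val_two, Matrix.tail_cons, map_mul, map_pow, map_neg, map_zero, map_one,
    omega_conj, map_inv₀, Complex.conj_ofReal]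
  linear_combination (ρ 2 2 + (-1 : ℂ) * ρ 2 1 + (-1 : ℂ) * ρ 1 2 + ρ 1 1) * hs2 + ((0:ℂ)) * omega_cube

private lemma q01 (ρ : Matrix (Fin 3) (Fin 3) ℂ) :
    (ρ * hesseProj (0, 1)).trace = (1/2) * (ρ 2 2 + ρ 1 1 + (-1 : ℂ) * ω * ρ 1 2 + (-1 : ℂ) * ω^2 * ρ 2 1) := by
  rw [hesseProj, hv01, trace_helper]
  simp only [Fin.sum_univ_three, Matrix.cons_val_zero, Matrix.cons_val_one, Matrix.head_cons,
    Matrix.cons_val_two, Matrix.tail_cons, map_mul, map_pow, map_neg, map_zero, map_one,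
    omega_conj, map_inv₀, Complex.conj_ofReal]
  linear_combination (ω^3 * ρ 1 1 + (-1 : ℂ) * ω^4 * ρ 1 2 + (-1 : ℂ) * ω^5 * ρ 2 1 + ω^6 * ρ 2 2) * hs2 + ((1/2 : ℂ) * ρ 2 2 + (1/2 : ℂ) * ρ 1 1 + (-1/2 : ℂ) * ω * ρ 1 2 + (-1/2 : ℂ) * ω^2 * ρ 2 1 + (1/2 : ℂ) * ω^3 * ρ 2 2) * omega_cube

private lemma q02 (ρ : Matrix (Fin 3) (Fin 3) ℂ) :
    (ρ * hesseProj (0, 2)).trace = (1/2) * (ρ 2 2 + ρ 1 1 + (-1 : ℂ) * ω * ρ 2 1 + (-1 : ℂ) * ω^2 * ρ 1 2) := by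
  rw [hesseProj, hv02, trace_helper]
  simp only [Fin.sum_univ_three, Matrix.cons_val_zero, Matrix.cons_val_one, Matrix.head_cons,
    Matrix.cons_val_two, Matrix.tail_cons, map_mul, map_pow, map_neg, map_zero, map_one,
    omega_conj, map_inv₀, Complex.conj_ofReal]
  linear_combination (ω^6 * ρ 1 1 + (-1 : ℂ) * ω^8 * ρ 1 2 + (-1 : ℂ) * ω^10 * ρ 2 1 + ω^12 * ρ 2 2) * hs2 + ((1/2 : ℂ) * ρ 2 2 + (1/2 : ℂ) * ρ 1 1 + (-1/2 : ℂ) * ω * ρ 2 1 + (-1/2 : ℂ) * ω^2 * ρ 1 2 + (1/2 : ℂ) * ω^3 * ρ 2 2 + (1/2 : ℂ) * ω^3 * ρ 1 1 + (-1/2 : ℂ) * ω^4 * ρ 2 1 + (-1/2 : ℂ) * ω^5 * ρ 1 2 + (1/2 : ℂ) * ω^6 * ρ 2 2 + (-1/2 : ℂ) * ω^7 * ρ 2 1 + (1/2 : ℂ) * ω^9 * ρ 2 2) * omega_cube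

private lemma q10 (ρ : Matrix (Fin 3) (Fin 3) ℂ) :
    (ρ * hesseProj (1, 0)).trace = (1/2) * (ρ 2 2 + (-1 : ℂ) * ρ 2 0 + (-1 : ℂ) * ρ 0 2 + ρ 0 0) := by
  rw [hesseProj, hv10, trace_helper]
  simp only [Fin.sum_univ_three, Matrix.cons_val_zero, Matrix.cons_val_one, Matrix.head_cons,
    Matrix.cons_val_two, Matrix.tail_cons, map_mul, map_pow, map_neg, map_zero, map_one,
    omega_conj, map_inv₀, Complex.conj_ofReal]
  linear_combination (ρ 2 2 + (-1 : ℂ) * ρ 2 0 + (-1 : ℂ) * ρ 0 2 + ρ 0 0) * hs2 + ((0:ℂ)) * omega_cube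

private lemma q11 (ρ : Matrix (Fin 3) (Fin 3) ℂ) :
    (ρ * hesseProj (1, 1)).trace = (1/2) * (ρ 2 2 + ρ 0 0 + (-1 : ℂ) * ω * ρ 2 0 + (-1 : ℂ) * ω^2 * ρ 0 2) := by
  rw [hesseProj, hv11, trace_helper]
  simp only [Fin.sum_univ_three, Matrix.cons_val_zero, Matrix.cons_val_one, Matrix.head_cons,
    Matrix.cons_val_two, Matrix.tail_cons, map_mul, map_pow, map_neg, map_zero, map_one,
    omega_conj, map_inv₀, Complex.conj_ofReal]
  linear_combination (ω^3 * ρ 2 2 + (-1 : ℂ) * ω^4 * ρ 2 0 + (-1 : ℂ) * ω^5 * ρ 0 2 + ω^6 * ρ 0 0) * hs2 + ((1/2 : ℂ) * ρ 2 2 + (1/2 : ℂ) * ρ 0 0 + (-1/2 : ℂ) * ω * ρ 2 0 + (-1/2 : ℂ) * ω^2 * ρ 0 2 + (1/2 : ℂ) * ω^3 * ρ 0 0) * omega_cube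

private lemma q12 (ρ : Matrix (Fin 3) (Fin 3) ℂ) :
    (ρ * hesseProj (1, 2)).trace = (1/2) * (ρ 2 2 + ρ 0 0 + (-1 : ℂ) * ω * ρ 0 2 + (-1 : ℂ) * ω^2 * ρ 2 0) := by
  rw [hesseProj, hv12, trace_helper]
  simp only [Fin.sum_univ_three, Matrix.cons_val_zero, Matrix.cons_val_one, Matrix.head_cons,
    Matrix.cons_val_two, Matrix.tail_cons, map_mul, map_pow, map_neg, map_zero, map_one,
    omega_conj, map_inv₀, Complex.conj_ofReal]
  linear_combination (ω^6 * ρ 2 2 + (-1 : ℂ) * ω^8 * ρ 2 0 + (-1 : ℂ) * ω^10 * ρ 0 2 + ω^12 * ρ 0 0) * hs2 + ((1/2 : ℂ) * ρ 2 2 + (1/2 : ℂ) * ρ 0 0 + (-1/2 : ℂ) * ω * ρ 0 2 + (-1/2 : ℂ) * ω^2 * ρ 2 0 + (1/2 : ℂ) * ω^3 * ρ 2 2 + (1/2 : ℂ) * ω^3 * ρ 0 0 + (-1/2 : ℂ) * ω^4 * ρ 0 2 + (-1/2 : ℂ) * ω^5 * ρ 2 0 + (1/2 : ℂ) * ω^6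 * ρ 0 0 + (-1/2 : ℂ) * ω^7 * ρ 0 2 + (1/2 : ℂ) * ω^9 * ρ 0 0) * omega_cube

private lemma q20 (ρ : Matrix (Fin 3) (Fin 3) ℂ) :
    (ρ * hesseProj (2, 0)).trace = (1/2) * (ρ 1 1 + (-1 : ℂ) * ρ 1 0 + (-1 : ℂ) * ρ 0 1 + ρ 0 0) := by
  rw [hesseProj, hv20, trace_helper]
  simp only [Fin.sum_univ_three, Matrix.cons_val_zero, Matrix.cons_val_one, Matrix.head_cons,
    Matrix.cons_val_two, Matrix.tail_cons, map_mul, map_pow, map_neg, map_zero, map_one,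
    omega_conj, map_inv₀, Complex.conj_ofReal]
  linear_combination (ρ 1 1 + (-1 : ℂ) * ρ 1 0 + (-1 : ℂ) * ρ 0 1 + ρ 0 0) * hs2 + ((0:ℂ)) * omega_cube

private lemma q21 (ρ : Matrix (Fin 3) (Fin 3) ℂ) :
    (ρ * hesseProj (2, 1)).trace = (1/2) * (ρ 1 1 + ρ 0 0 + (-1 : ℂ) * ω * ρ 0 1 + (-1 : ℂ) * ω^2 * ρ 1 0) := by
  rw [hesseProj, hv21, trace_helper]
  simp only [Fin.sum_univ_three, Matrix.cons_val_zero, Matrix.cons_val_one, Matrix.head_cons,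
    Matrix.cons_val_two, Matrix.tail_cons, map_mul, map_pow, map_neg, map_zero, map_one,
    omega_conj, map_inv₀, Complex.conj_ofReal]
  linear_combination (ω^3 * ρ 0 0 + (-1 : ℂ) * ω^4 * ρ 0 1 + (-1 : ℂ) * ω^5 * ρ 1 0 + ω^6 * ρ 1 1) * hs2 + ((1/2 : ℂ) * ρ 1 1 + (1/2 : ℂ) * ρ 0 0 + (-1/2 : ℂ) * ω * ρ 0 1 + (-1/2 : ℂ) * ω^2 * ρ 1 0 + (1/2 : ℂ) * ω^3 * ρ 1 1) * omega_cube

private lemma q22 (ρ : Matrix (Fin 3) (Fin 3) ℂ) :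
    (ρ * hesseProj (2, 2)).trace = (1/2) * (ρ 1 1 + ρ 0 0 + (-1 : ℂ) * ω * ρ 1 0 + (-1 : ℂ) * ω^2 * ρ 0 1) := by
  rw [hesseProj, hv22, trace_helper]
  simp only [Fin.sum_univ_three, Matrix.cons_val_zero, Matrix.cons_val_one, Matrix.head_cons,
    Matrix.cons_val_two, Matrix.tail_cons, map_mul, map_pow, map_neg, map_zero, map_one,
    omega_conj, map_inv₀, Complex.conj_ofReal]
  linear_combination (ω^6 * ρ 0 0 + (-1 : ℂ) * ω^8 * ρ 0 1 + (-1 : ℂ) * ω^10 * ρ 1 0 + ω^12 * ρ 1 1) * hs2 + ((1/2 : ℂ) * ρ 1 1 + (1/2 : ℂ) * ρ 0 0 + (-1/2 : ℂ) * ω * ρ 1 0 + (-1/2 : ℂ) * ω^2 * ρ 0 1 + (1/2 : ℂ) * ω^3 * ρ 1 1 + (1/2 : ℂ) * ω^3 * ρ 0 0 + (-1/2 : ℂ) * ω^4 * ρ 1 0 + (-1/2 : ℂ) * ω^5 * ρ 0 1 + (1/2 : ℂ) * ω^6 * ρ 1 1 + (-1/2 : ℂ) * ω^7 * ρ 1 0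 + (1/2 : ℂ) * ω^9 * ρ 1 1) * omega_cube

private lemma key2 (ρ : Matrix (Fin 3) (Fin 3) ℂ) :
    ∑ a : ZMod 3 × ZMod 3, ((ρ * hesseProj a).trace / 3)^2
      = ((ρ * ρ).trace + ρ.trace^2) / 12 := by
  simp only [Fintype.sum_prod_type, zsum]
  simp only [q00 ρ, q01 ρ, q02 ρ, q10 ρ, q11 ρ, q12 ρ, q20 ρ, q21 ρ, q22 ρ]
  simp only [Matrix.trace_fin_three, Matrix.mul_apply, Fin.sum_univ_three]
  linear_combination ((1/9 : ℂ) * ρ 1 2 * ρ 2 1 + (1/9 : ℂ) * ρ 0 2 * ρ 2 0 + (1/9 : ℂ) * ρ 0 1 * ρ 1 0 + (1/36 : ℂ) * ω * ρ 2 1^2 + (1/36 : ℂ) * ω * ρ 2 0^2 + (1/36 : ℂ) * ω * ρ 1 2^2 + (1/36 : ℂ) * ω * ρ 1 0^2 + (1/36 : ℂ) * ω * ρ 0 2^2 + (1/36 : ℂ) * ω * ρ 0 1^2) * omega_cube + ((-1/18 : ℂ) * ρ 2 1 * ρ 2 2 + (1/36 : ℂ) * ρ 2 1^2 + (-1/18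 : ℂ) * ρ 2 0 * ρ 2 2 + (1/36 : ℂ) * ρ 2 0^2 + (-1/18 : ℂ) * ρ 1 2 * ρ 2 2 + (1/36 : ℂ) * ρ 1 2^2 + (-1/18 : ℂ) * ρ 1 1 * ρ 2 1 + (-1/18 : ℂ) * ρ 1 1 * ρ 1 2 + (-1/18 : ℂ) * ρ 1 0 * ρ 1 1 + (1/36 : ℂ) * ρ 1 0^2 + (-1/18 : ℂ) * ρ 0 2 * ρ 2 2 + (1/36 : ℂ) * ρ 0 2^2 + (-1/18 : ℂ) * ρ 0 1 * ρ 1 1 + (1/36 : ℂ) * ρ 0 1^2 + (-1/18 : ℂ) * ρ 0 0 * ρ 2 0 + (-1/18 : ℂ) * ρ 0 0 * ρ 1 0 + (-1/18 : ℂ) * ρ 0 0 * ρ 0 2 + (-1/18 : ℂ) * ρ 0 0 * ρ 0 1) * omega_rel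

private lemma key3 (ρ : Matrix (Fin 3) (Fin 3) ℂ) :
    ∑ a : ZMod 3 × ZMod 3, ((ρ * hesseProj a).trace / 3)^3
      = (1/2) * (∑ a : ZMod 3 × ZMod 3, ∑ b : ZMod 3 × ZMod 3, ∑ c : ZMod 3 × ZMod 3,
          (if a ≠ b ∧ a ≠ c ∧ b ≠ c ∧ a + b + c = 0
           then (ρ * hesseProj a).trace / 3 * ((ρ * hesseProj b).trace / 3) *
             ((ρ * hesseProj c).trace / 3) else 0))
        + ((ρ * ρ * ρ).trace - ρ.trace^3) / 24 := by
  simp only [Fintype.sum_prod_type, zsum]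
  simp (config := { decide := true }) only [if_true, if_false, ite_true, ite_false]
  simp only [q00 ρ, q01 ρ, q02 ρ, q10 ρ, q11 ρ, q12 ρ, q20 ρ, q21 ρ, q22 ρ]
  simp only [Matrix.trace_fin_three, Matrix.mul_apply, Fin.sum_univ_three]
  linear_combination ((-1/72 : ℂ) * ρ 2 1^2 * ρ 2 2 + (1/216 : ℂ) * ρ 2 1^3 + (-1/72 : ℂ) * ρ 2 0^2 * ρ 2 2 + (1/216 : ℂ) * ρ 2 0^3 + (1/18 : ℂ) * ρ 1 2 * ρ 2 1 * ρ 2 2 + (1/72 : ℂ) * ρ 1 2 * ρ 2 1^2 + (-1/72 : ℂ) * ρ 1 2^2 * ρ 2 2 + (1/72 : ℂ) * ρ 1 2^2 * ρ 2 1 + (1/216 : ℂ) * ρ 1 2^3 + (-1/72 : ℂ) * ρ 1 1 * ρ 2 1^2 + (-1/36 : ℂ) * ρ 1 1 * ρ 2 0 * ρ 2 1 + (1/18 : ℂ) * ρ 1 1 * ρ 1 2 * ρ 2 1 + (-1/36 : ℂ) * ρ 1 1 * ρ 1 2 * ρ 2 0 + (-1/72 : ℂ) * ρ 1 1 * ρ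 1 2^2 + (-1/36 : ℂ) * ρ 1 0 * ρ 2 1 * ρ 2 2 + (-1/36 : ℂ) * ρ 1 0 * ρ 2 0 * ρ 2 2 + (1/36 : ℂ) * ρ 1 0 * ρ 2 0 * ρ 2 1 + (-1/36 : ℂ) * ρ 1 0 * ρ 1 2 * ρ 2 2 + (1/36 : ℂ) * ρ 1 0 * ρ 1 2 * ρ 2 0 + (-1/36 : ℂ) * ρ 1 0 * ρ 1 1 * ρ 2 0 + (-1/72 : ℂ) * ρ 1 0^2 * ρ 1 1 + (1/216 : ℂ) * ρ 1 0^3 + (1/18 : ℂ) * ρ 0 2 * ρ 2 0 * ρ 2 2 + (1/72 : ℂ) * ρ 0 2 * ρ 2 0^2 + (-1/36 : ℂ) * ρ 0 2 * ρ 1 1 * ρ 2 1 + (-1/36 : ℂ) * ρ 0 2 * ρ 1 1 * ρ 1 2 + (-1/36 : ℂ) * ρ 0 2 * ρ 1 0 * ρ 2 2 + (1/9 : ℂ) * ρ 0 2 * ρ 1 0 * ρ 2 1 + (1/36 : ℂ) * ρ 0 2 * ρ 1 0 * ρ 1 2 + (-1/36 : ℂ) * ρ 0 2 * ρ 1 0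 * ρ 1 1 + (-1/72 : ℂ) * ρ 0 2^2 * ρ 2 2 + (1/72 : ℂ) * ρ 0 2^2 * ρ 2 0 + (1/216 : ℂ) * ρ 0 2^3 + (-1/36 : ℂ) * ρ 0 1 * ρ 2 1 * ρ 2 2 + (-1/36 : ℂ) * ρ 0 1 * ρ 2 0 * ρ 2 2 + (1/36 : ℂ) * ρ 0 1 * ρ 2 0 * ρ 2 1 + (-1/36 : ℂ) * ρ 0 1 * ρ 1 2 * ρ 2 2 + (1/9 : ℂ) * ρ 0 1 * ρ 1 2 * ρ 2 0 + (-1/36 : ℂ) * ρ 0 1 * ρ 1 1 * ρ 2 0 + (1/18 : ℂ) * ρ 0 1 * ρ 1 0 * ρ 1 1 + (1/72 : ℂ) * ρ 0 1 * ρ 1 0^2 + (-1/36 : ℂ) * ρ 0 1 * ρ 0 2 * ρ 2 2 + (1/36 : ℂ) * ρ 0 1 * ρ 0 2 * ρ 2 1 + (1/36 : ℂ) * ρ 0 1 * ρ 0 2 * ρ 1 2 + (-1/36 : ℂ) * ρ 0 1 * ρ 0 2 * ρ 1 1 + (-1/72 : ℂ) * ρ 0 1^2 * ρ 1 1 + (1/72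 : ℂ) * ρ 0 1^2 * ρ 1 0 + (1/216 : ℂ) * ρ 0 1^3 + (-1/36 : ℂ) * ρ 0 0 * ρ 2 0 * ρ 2 1 + (-1/72 : ℂ) * ρ 0 0 * ρ 2 0^2 + (-1/36 : ℂ) * ρ 0 0 * ρ 1 2 * ρ 2 0 + (-1/36 : ℂ) * ρ 0 0 * ρ 1 0 * ρ 2 1 + (-1/36 : ℂ) * ρ 0 0 * ρ 1 0 * ρ 1 2 + (-1/72 : ℂ) * ρ 0 0 * ρ 1 0^2 + (-1/36 : ℂ) * ρ 0 0 * ρ 0 2 * ρ 2 1 + (1/18 : ℂ) * ρ 0 0 * ρ 0 2 * ρ 2 0 + (-1/36 : ℂ) * ρ 0 0 * ρ 0 2 * ρ 1 2 + (-1/72 : ℂ) * ρ 0 0 * ρ 0 2^2 + (-1/36 : ℂ) * ρ 0 0 * ρ 0 1 * ρ 2 1 + (-1/36 : ℂ) * ρ 0 0 * ρ 0 1 * ρ 1 2 + (1/18 : ℂ) * ρ 0 0 * ρ 0 1 * ρ 1 0 + (-1/72 : ℂ) * ρ 0 0 * ρ 0 1^2 + (1/72 : ℂ) * ω * ρ 2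 1^2 * ρ 2 2 + (1/72 : ℂ) * ω * ρ 2 0^2 * ρ 2 2 + (-1/72 : ℂ) * ω * ρ 1 2 * ρ 2 1 * ρ 2 2 + (1/72 : ℂ) * ω * ρ 1 2^2 * ρ 2 2 + (1/72 : ℂ) * ω * ρ 1 1 * ρ 2 1^2 + (-1/72 : ℂ) * ω * ρ 1 1 * ρ 2 0 * ρ 2 1 + (-1/72 : ℂ) * ω * ρ 1 1 * ρ 1 2 * ρ 2 1 + (-1/72 : ℂ) * ω * ρ 1 1 * ρ 1 2 * ρ 2 0 + (1/72 : ℂ) * ω * ρ 1 1 * ρ 1 2^2 + (-1/72 : ℂ) * ω * ρ 1 0 * ρ 2 1 * ρ 2 2 + (-1/72 : ℂ) * ω * ρ 1 0 * ρ 2 0 * ρ 2 2 + (1/24 : ℂ) * ω * ρ 1 0 * ρ 2 0 * ρ 2 1 + (-1/72 : ℂ) * ω * ρ 1 0 * ρ 1 2 * ρ 2 2 + (1/24 : ℂ) * ω * ρ 1 0 * ρ 1 2 * ρ 2 0 + (-1/72 : ℂ) * ω * ρ 1 0 * ρ 1 1 * ρ 2 0 + (1/72 : ℂ) * ω * ρ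 1 0^2 * ρ 1 1 + (-1/72 : ℂ) * ω * ρ 0 2 * ρ 2 0 * ρ 2 2 + (-1/72 : ℂ) * ω * ρ 0 2 * ρ 1 1 * ρ 2 1 + (-1/72 : ℂ) * ω * ρ 0 2 * ρ 1 1 * ρ 1 2 + (-1/72 : ℂ) * ω * ρ 0 2 * ρ 1 0 * ρ 2 2 + (1/24 : ℂ) * ω * ρ 0 2 * ρ 1 0 * ρ 1 2 + (-1/72 : ℂ) * ω * ρ 0 2 * ρ 1 0 * ρ 1 1 + (1/72 : ℂ) * ω * ρ 0 2^2 * ρ 2 2 + (-1/72 : ℂ) * ω * ρ 0 1 * ρ 2 1 * ρ 2 2 + (-1/72 : ℂ) * ω * ρ 0 1 * ρ 2 0 * ρ 2 2 + (1/24 : ℂ) * ω * ρ 0 1 * ρ 2 0 * ρ 2 1 + (-1/72 : ℂ) * ω * ρ 0 1 * ρ 1 2 * ρ 2 2 + (-1/72 : ℂ) * ω * ρ 0 1 * ρ 1 1 * ρ 2 0 + (-1/72 : ℂ) * ω * ρ 0 1 * ρ 1 0 * ρ 1 1 + (-1/72 : ℂ) * ω * ρ 0 1 * ρ 0 2 *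 ρ 2 2 + (1/24 : ℂ) * ω * ρ 0 1 * ρ 0 2 * ρ 2 1 + (1/24 : ℂ) * ω * ρ 0 1 * ρ 0 2 * ρ 1 2 + (-1/72 : ℂ) * ω * ρ 0 1 * ρ 0 2 * ρ 1 1 + (1/72 : ℂ) * ω * ρ 0 1^2 * ρ 1 1 + (-1/72 : ℂ) * ω * ρ 0 0 * ρ 2 0 * ρ 2 1 + (1/72 : ℂ) * ω * ρ 0 0 * ρ 2 0^2 + (-1/72 : ℂ) * ω * ρ 0 0 * ρ 1 2 * ρ 2 0 + (-1/72 : ℂ) * ω * ρ 0 0 * ρ 1 0 * ρ 2 1 + (-1/72 : ℂ) * ω * ρ 0 0 * ρ 1 0 * ρ 1 2 + (1/72 : ℂ) * ω * ρ 0 0 * ρ 1 0^2 + (-1/72 : ℂ) * ω * ρ 0 0 * ρ 0 2 * ρ 2 1 + (-1/72 : ℂ) * ω * ρ 0 0 * ρ 0 2 * ρ 2 0 + (-1/72 : ℂ) * ω * ρ 0 0 * ρ 0 2 * ρ 1 2 + (1/72 : ℂ) * ω * ρ 0 0 * ρ 0 2^2 + (-1/72 : ℂ) * ω * ρ 0 0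 * ρ 0 1 * ρ 2 1 + (-1/72 : ℂ) * ω * ρ 0 0 * ρ 0 1 * ρ 1 2 + (-1/72 : ℂ) * ω * ρ 0 0 * ρ 0 1 * ρ 1 0 + (1/72 : ℂ) * ω * ρ 0 0 * ρ 0 1^2 + (-1/72 : ℂ) * ω^2 * ρ 1 2 * ρ 2 1^2 + (-1/72 : ℂ) * ω^2 * ρ 1 2^2 * ρ 2 1 + (1/72 : ℂ) * ω^2 * ρ 1 0 * ρ 2 0 * ρ 2 1 + (1/72 : ℂ) * ω^2 * ρ 1 0 * ρ 1 2 * ρ 2 0 + (-1/72 : ℂ) * ω^2 * ρ 0 2 * ρ 2 0^2 + (1/72 : ℂ) * ω^2 * ρ 0 2 * ρ 1 0 * ρ 1 2 + (-1/72 : ℂ) * ω^2 * ρ 0 2^2 * ρ 2 0 + (1/72 : ℂ) * ω^2 * ρ 0 1 * ρ 2 0 * ρ 2 1 + (-1/72 : ℂ) * ω^2 * ρ 0 1 * ρ 1 0^2 + (1/72 : ℂ) * ω^2 * ρ 0 1 * ρ 0 2 * ρ 2 1 + (1/72 : ℂ) * ω^2 * ρ 0 1 * ρ 0 2 * ρ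 1 2 + (-1/72 : ℂ) * ω^2 * ρ 0 1^2 * ρ 1 0 + (-1/216 : ℂ) * ω^3 * ρ 2 1^3 + (-1/216 : ℂ) * ω^3 * ρ 2 0^3 + (-1/216 : ℂ) * ω^3 * ρ 1 2^3 + (-1/216 : ℂ) * ω^3 * ρ 1 0^3 + (1/72 : ℂ) * ω^3 * ρ 0 2 * ρ 1 0 * ρ 2 1 + (-1/216 : ℂ) * ω^3 * ρ 0 2^3 + (1/72 : ℂ) * ω^3 * ρ 0 1 * ρ 1 2 * ρ 2 0 + (-1/216 : ℂ) * ω^3 * ρ 0 1^3) * omega_cube + ((-1/24 : ℂ) * ρ 1 2 * ρ 2 1 * ρ 2 2 + (1/24 : ℂ) * ρ 1 1 * ρ 2 1 * ρ 2 2 + (1/24 : ℂ) * ρ 1 1 * ρ 2 0 * ρ 2 2 + (-1/24 : ℂ) * ρ 1 1 * ρ 2 0 * ρ 2 1 + (1/24 : ℂ) * ρ 1 1 * ρ 1 2 * ρ 2 2 + (-1/24 : ℂ) * ρ 1 1 * ρ 1 2 * ρ 2 1 + (-1/24 : ℂ) * ρ 1 1 * ρ 1 2 * ρ 2 0 + (1/24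 : ℂ) * ρ 1 1^2 * ρ 2 0 + (1/24 : ℂ) * ρ 1 0 * ρ 2 2^2 + (-1/24 : ℂ) * ρ 1 0 * ρ 2 1 * ρ 2 2 + (-1/24 : ℂ) * ρ 1 0 * ρ 2 0 * ρ 2 2 + (1/24 : ℂ) * ρ 1 0 * ρ 2 0 * ρ 2 1 + (-1/24 : ℂ) * ρ 1 0 * ρ 1 2 * ρ 2 2 + (1/24 : ℂ) * ρ 1 0 * ρ 1 2 * ρ 2 0 + (1/24 : ℂ) * ρ 1 0 * ρ 1 1 * ρ 2 2 + (-1/24 : ℂ) * ρ 1 0 * ρ 1 1 * ρ 2 0 + (-1/24 : ℂ) * ρ 0 2 * ρ 2 0 * ρ 2 2 + (1/24 : ℂ) * ρ 0 2 * ρ 1 1 * ρ 2 2 + (-1/24 : ℂ) * ρ 0 2 * ρ 1 1 * ρ 2 1 + (-1/24 : ℂ) * ρ 0 2 * ρ 1 1 * ρ 1 2 + (1/24 : ℂ) * ρ 0 2 * ρ 1 1^2 + (-1/24 : ℂ) * ρ 0 2 * ρ 1 0 * ρ 2 2 + (1/24 : ℂ) * ρ 0 2 * ρ 1 0 * ρ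 1 2 + (-1/24 : ℂ) * ρ 0 2 * ρ 1 0 * ρ 1 1 + (1/24 : ℂ) * ρ 0 1 * ρ 2 2^2 + (-1/24 : ℂ) * ρ 0 1 * ρ 2 1 * ρ 2 2 + (-1/24 : ℂ) * ρ 0 1 * ρ 2 0 * ρ 2 2 + (1/24 : ℂ) * ρ 0 1 * ρ 2 0 * ρ 2 1 + (-1/24 : ℂ) * ρ 0 1 * ρ 1 2 * ρ 2 2 + (1/24 : ℂ) * ρ 0 1 * ρ 1 1 * ρ 2 2 + (-1/24 : ℂ) * ρ 0 1 * ρ 1 1 * ρ 2 0 + (-1/24 : ℂ) * ρ 0 1 * ρ 1 0 * ρ 1 1 + (-1/24 : ℂ) * ρ 0 1 * ρ 0 2 * ρ 2 2 + (1/24 : ℂ) * ρ 0 1 * ρ 0 2 * ρ 2 1 + (1/24 : ℂ) * ρ 0 1 * ρ 0 2 * ρ 1 2 + (-1/24 : ℂ) * ρ 0 1 * ρ 0 2 * ρ 1 1 + (1/24 : ℂ) * ρ 0 0 * ρ 2 1 * ρ 2 2 + (1/24 : ℂ) * ρ 0 0 * ρ 2 0 * ρ 2 2 + (-1/24 : ℂ)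 * ρ 0 0 * ρ 2 0 * ρ 2 1 + (1/24 : ℂ) * ρ 0 0 * ρ 1 2 * ρ 2 2 + (-1/24 : ℂ) * ρ 0 0 * ρ 1 2 * ρ 2 0 + (1/24 : ℂ) * ρ 0 0 * ρ 1 1 * ρ 2 1 + (1/24 : ℂ) * ρ 0 0 * ρ 1 1 * ρ 2 0 + (1/24 : ℂ) * ρ 0 0 * ρ 1 1 * ρ 1 2 + (1/24 : ℂ) * ρ 0 0 * ρ 1 0 * ρ 2 2 + (-1/24 : ℂ) * ρ 0 0 * ρ 1 0 * ρ 2 1 + (-1/24 : ℂ) * ρ 0 0 * ρ 1 0 * ρ 1 2 + (1/24 : ℂ) * ρ 0 0 * ρ 1 0 * ρ 1 1 + (1/24 : ℂ) * ρ 0 0 * ρ 0 2 * ρ 2 2 + (-1/24 : ℂ) * ρ 0 0 * ρ 0 2 * ρ 2 1 + (-1/24 : ℂ) * ρ 0 0 * ρ 0 2 * ρ 2 0 + (-1/24 : ℂ) * ρ 0 0 * ρ 0 2 * ρ 1 2 + (1/24 : ℂ) * ρ 0 0 * ρ 0 2 * ρ 1 1 + (1/24 : ℂ) * ρ 0 0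 * ρ 0 1 * ρ 2 2 + (-1/24 : ℂ) * ρ 0 0 * ρ 0 1 * ρ 2 1 + (-1/24 : ℂ) * ρ 0 0 * ρ 0 1 * ρ 1 2 + (1/24 : ℂ) * ρ 0 0 * ρ 0 1 * ρ 1 1 + (-1/24 : ℂ) * ρ 0 0 * ρ 0 1 * ρ 1 0 + (1/24 : ℂ) * ρ 0 0^2 * ρ 2 1 + (1/24 : ℂ) * ρ 0 0^2 * ρ 1 2) * omega_rel

section Spectral

private lemma trace_eq_sum_eig {A : Matrix (Fin 3) (Fin 3) ℂ} (hA : A.IsHermitian) :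
    A.trace = ∑ i, (hA.eigenvalues i : ℂ) := by
  have hU : star (hA.eigenvectorUnitary : Matrix (Fin 3) (Fin 3) ℂ) *
      (hA.eigenvectorUnitary : Matrix (Fin 3) (Fin 3) ℂ) = 1 :=
    Matrix.mem_unitaryGroup_iff'.mp hA.eigenvectorUnitary.2
  conv_lhs => rw [hA.spectral_theorem, Unitary.conjStarAlgAut_apply]
  rw [Matrix.trace_mul_cycle, hU, one_mul, Matrix.trace_diagonal]
  simp

private lemma trace_sq_eq_sum_eig {A : Matrix (Fin 3) (Fin 3) ℂ} (hA : A.IsHermitian) :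
    (A * A).trace = ∑ i, (hA.eigenvalues i : ℂ) ^ 2 := by
  have hU : star (hA.eigenvectorUnitary : Matrix (Fin 3) (Fin 3) ℂ) *
      (hA.eigenvectorUnitary : Matrix (Fin 3) (Fin 3) ℂ) = 1 :=
    Matrix.mem_unitaryGroup_iff'.mp hA.eigenvectorUnitary.2
  set U : Matrix (Fin 3) (Fin 3) ℂ := (hA.eigenvectorUnitary : Matrix (Fin 3) (Fin 3) ℂ)
  set D : Matrix (Fin 3) (Fin 3) ℂ :=
    Matrix.diagonal (RCLike.ofReal ∘ hA.eigenvalues) with hD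
  have hmul : (U * D * star U) * (U * D * star U) = U * (D * D) * star U := by
    simp only [Matrix.mul_assoc]
    rw [← Matrix.mul_assoc (star U) U, hU, Matrix.one_mul]
  conv_lhs => rw [hA.spectral_theorem, Unitary.conjStarAlgAut_apply, hmul]
  rw [Matrix.trace_mul_cycle, hU, one_mul, hD,
    Matrix.diagonal_mul_diagonal, Matrix.trace_diagonal]
  simp [pow_two]

/-- A PSD matrix with trace 1 and trace of square 1 is a rank-one projection. -/
private lemma psd_pure {ρ : Matrix (Fin 3) (Fin 3) ℂ} (hpsd : ρ.PosSemidef)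
    (htr : ρ.trace = 1) (htr2 : (ρ * ρ).trace = 1) : ρ * ρ = ρ ∧ ρ.rank = 1 := by
  have hH : ρ.IsHermitian := hpsd.1
  set lam : Fin 3 → ℝ := hH.eigenvalues with hlam
  have hnn : ∀ i, 0 ≤ lam i := fun i => hpsd.eigenvalues_nonneg i
  have hsum : ∑ i, lam i = 1 := by
    have h := trace_eq_sum_eig hH
    rw [htr] at h
    exact_mod_cast h.symm
  have hsq : ∑ i, lam i ^ 2 = 1 := by
    have h := trace_sq_eq_sum_eig hH
    rw [htr2] at h
    exact_mod_cast h.symm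
  have hle1 : ∀ i, lam i ≤ 1 := by
    intro i
    calc lam i ≤ ∑ j, lam j := Finset.single_le_sum (fun j _ => hnn j) (Finset.mem_univ i)
    _ = 1 := hsum
  have hidem : ∀ i, lam i ^ 2 = lam i := by
    intro i
    by_contra hne
    have hlt : ∑ j, lam j ^ 2 < ∑ j, lam j := by
      refine Finset.sum_lt_sum (fun j _ => by nlinarith [hnn j, hle1 j]) ⟨i, Finset.mem_univ i,
        lt_of_le_of_ne (by nlinarith [hnn i, hle1 i]) hne⟩
    rw [hsq, hsum] at hlt
    exact lt_irrefl _ hlt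
  have hDD : (Matrix.diagonal (RCLike.ofReal ∘ hH.eigenvalues) : Matrix (Fin 3) (Fin 3) ℂ) *
      Matrix.diagonal (RCLike.ofReal ∘ hH.eigenvalues) =
      Matrix.diagonal (RCLike.ofReal ∘ hH.eigenvalues) := by
    rw [Matrix.diagonal_mul_diagonal]
    ext i j
    rcases eq_or_ne i j with rfl | hij
    · simp only [Matrix.diagonal_apply_eq, Function.comp_apply]
      have h1 : lam i * lam i = lam i := by nlinarith [hidem i]
      exact_mod_cast h1
    · simp [Matrix.diagonal_apply_ne _ hij]
  have hU : star (hH.eigenvectorUnitary : Matrix (Fin 3) (Fin 3) ℂ) *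
      (hH.eigenvectorUnitary : Matrix (Fin 3) (Fin 3) ℂ) = 1 :=
    Matrix.mem_unitaryGroup_iff'.mp hH.eigenvectorUnitary.2
  set U : Matrix (Fin 3) (Fin 3) ℂ := (hH.eigenvectorUnitary : Matrix (Fin 3) (Fin 3) ℂ)
  set D : Matrix (Fin 3) (Fin 3) ℂ :=
    Matrix.diagonal (RCLike.ofReal ∘ hH.eigenvalues) with hD
  have hmul : (U * D * star U) * (U * D * star U) = U * (D * D) * star U := by
    simp only [Matrix.mul_assoc]
    rw [← Matrix.mul_assoc (star U) U, hU, Matrix.one_mul]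
  constructor
  · conv_lhs => rw [hH.spectral_theorem, Unitary.conjStarAlgAut_apply, hmul, hDD]
    exact hH.spectral_theorem.symm
  · rw [hH.rank_eq_card_non_zero_eigs, Fintype.card_subtype]
    have hone : ∀ i ∈ Finset.univ.filter (fun i => lam i ≠ 0), lam i = 1 := by
      intro i hi
      have hi' : lam i ≠ 0 := (Finset.mem_filter.mp hi).2
      have := hidem i
      have : lam i * (lam i - 1) = 0 := by nlinarith
      rcases mul_eq_zero.mp this with h | h
      · exact absurd h hi'
      · linarith
    have hsum' : ∑ i ∈ Finset.univ.filter (fun i => lam i ≠ 0), lam i = 1 := by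
      rw [Finset.sum_filter_ne_zero]
      exact hsum
    have hcard : (((Finset.univ.filter (fun i => lam i ≠ 0)).card : ℝ)) = 1 := by
      calc (((Finset.univ.filter (fun i => lam i ≠ 0)).card : ℝ))
          = ∑ _i ∈ Finset.univ.filter (fun i => lam i ≠ 0), (1:ℝ) := by
            rw [Finset.sum_const, nsmul_eq_mul, mul_one]
        _ = ∑ i ∈ Finset.univ.filter (fun i => lam i ≠ 0), lam i :=
            Finset.sum_congr rfl fun i hi => (hone i hi).symm
        _ = 1 := hsum'
    exact_mod_cast hcard

end Spectral


/-- A qutrit density matrix ρ with Hesse-SIC probabilities p(a) = Tr(ρΠ_a)/3 is a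
rank-one orthogonal projection (pure) if and only if Σ_a p(a)² = 1/6 and
Σ_a p(a)³ = (1/2)·Σ p(a)p(b)p(c), the latter sum over ordered triples of pairwise
distinct collinear points of the affine plane (ℤ/3ℤ)² (i.e., a + b + c = 0). -/
theorem hesse_sic_pure_state_conditions
    (ρ : Matrix (Fin 3) (Fin 3) ℂ) (hpsd : ρ.PosSemidef) (htr : ρ.trace = 1)
    (p : ZMod 3 × ZMod 3 → ℝ)
    (hp : ∀ a, (p a : ℂ) = (ρ * hesseProj a).trace / 3) :
    (ρ * ρ = ρ ∧ ρ.rank = 1) ↔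
      ((∑ a, p a ^ 2) = 1 / 6 ∧
       (∑ a, p a ^ 3) = (1 / 2) * ∑ a, ∑ b, ∑ c,
          (if a ≠ b ∧ a ≠ c ∧ b ≠ c ∧ a + b + c = 0
           then p a * p b * p c else 0)) := by
  have hcast2 : ((∑ a, p a ^ 2 : ℝ) : ℂ)
      = ∑ a : ZMod 3 × ZMod 3, ((ρ * hesseProj a).trace / 3) ^ 2 := by
    push_cast
    exact Finset.sum_congr rfl fun a _ => by rw [hp a]
  have hcast3 : ((∑ a, p a ^ 3 : ℝ) : ℂ)
      = ∑ a : ZMod 3 × ZMod 3, ((ρ * hesseProj a).trace / 3) ^ 3 := by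
    push_cast
    exact Finset.sum_congr rfl fun a _ => by rw [hp a]
  have hcastL : ((∑ a, ∑ b, ∑ c,
        (if a ≠ b ∧ a ≠ c ∧ b ≠ c ∧ a + b + c = 0 then p a * p b * p c else 0) : ℝ) : ℂ)
      = ∑ a : ZMod 3 × ZMod 3, ∑ b : ZMod 3 × ZMod 3, ∑ c : ZMod 3 × ZMod 3,
          (if a ≠ b ∧ a ≠ c ∧ b ≠ c ∧ a + b + c = 0
           then (ρ * hesseProj a).trace / 3 * ((ρ * hesseProj b).trace / 3) *
             ((ρ * hesseProj c).trace / 3) else 0) := by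
    push_cast
    refine Finset.sum_congr rfl fun a _ => Finset.sum_congr rfl fun b _ =>
      Finset.sum_congr rfl fun c _ => ?_
    rw [apply_ite (Complex.ofReal), Complex.ofReal_mul, Complex.ofReal_mul,
      Complex.ofReal_zero, hp a, hp b, hp c]
  constructor
  · rintro ⟨hidem, -⟩
    have htr2 : (ρ * ρ).trace = 1 := by rw [hidem, htr]
    have htr3 : (ρ * ρ * ρ).trace = 1 := by rw [hidem, hidem, htr]
    constructor
    · have h := key2 ρ
      rw [htr2, htr] at h
      apply Complex.ofReal_injective
      show ((∑ a, p a ^ 2 : ℝ) : ℂ) = _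
      rw [hcast2, h]
      push_cast
      norm_num
    · have h := key3 ρ
      rw [htr3, htr] at h
      apply Complex.ofReal_injective
      show ((∑ a, p a ^ 3 : ℝ) : ℂ) = _
      rw [hcast3, h, Complex.ofReal_mul, hcastL]
      push_cast
      ring
  · rintro ⟨h1, -⟩
    refine psd_pure hpsd htr ?_
    have h1' : (∑ a : ZMod 3 × ZMod 3, ((ρ * hesseProj a).trace / 3) ^ 2) = 1/6 := by
      rw [← hcast2, h1]
      norm_num
    have hk := key2 ρ
    rw [htr] at hk
    linear_combination 12 * h1' - 12 * hk
end
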